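/- For 0 < p < 2 and a 2-Carleson measure μ on [0,1), one has sup_{a∈D} ∫_{[0,1)} (1-|a|²)^{p/2} / ((1-t²)^{2-p/2} |1-ta|^p) dμ(t) < ∞. -/

import Mathlib

open MeasureTheory Set Metric Complex

lemma exists_dyadic {x : ℝ} (hx : 1 ≤ x) : ∃ n : ℕ, (2:ℝ)^n ≤ x ∧ x < 2^(n+1) := by
  classical
  have h : ∃ k, x < (2:ℝ)^k := pow_unbounded_of_one_lt x one_lt_two
  have hn₀ : x < 2 ^ Nat.find h := Nat.find_spec h
  have hpos : Nat.find h ≠ 0 := by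
    intro h0
    rw [h0] at hn₀; simp at hn₀; linarith
  obtain ⟨k, hk⟩ := Nat.exists_eq_succ_of_ne_zero hpos
  refine ⟨k, le_of_not_gt (Nat.find_min h (by omega)), ?_⟩
  rw [hk] at hn₀; exact hn₀

lemma two_rpow_npow (δ : ℝ) (n : ℕ) : ((2:ℝ)^(-δ))^n = (2:ℝ)^(-(δ*n)) := by
  rw [← Real.rpow_natCast ((2:ℝ)^(-δ)) n, ← Real.rpow_mul (by norm_num)]
  ring_nf

lemma algA {r : ℝ} (hr : 0 < r) (δ C₀ : ℝ) (n : ℕ) :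
    (r * 2^n) ^ (-(2+δ)) * (C₀ * (r * 2^(n+1))^2) = C₀ * 4 * r^(-δ) * ((2:ℝ)^(-δ))^n := by
  have h2n : ((2:ℝ)^n) = (2:ℝ)^(n:ℝ) := (Real.rpow_natCast 2 n).symm
  have e1 : (r * 2^n) ^ (-(2+δ)) = r ^ (-(2+δ)) * (2:ℝ)^((n:ℝ) * (-(2+δ))) := by
    rw [h2n, Real.mul_rpow hr.le (by positivity), Real.rpow_mul (by norm_num)]
  have e2 : (r * 2^(n+1))^2 = r ^ (2:ℝ) * (2:ℝ)^((n:ℝ)*2 + 2) := by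
    rw [mul_pow, ← Real.rpow_natCast r 2, ← pow_mul, ← Real.rpow_natCast 2 ((n+1)*2)]
    push_cast; ring_nf
  rw [e1, e2, two_rpow_npow]
  have e3 : r ^ (-(2+δ)) * r ^ (2:ℝ) = r ^ (-δ) := by
    rw [← Real.rpow_add hr]; ring_nf
  have e4 : (2:ℝ)^((n:ℝ) * (-(2+δ))) * (2:ℝ)^((n:ℝ)*2 + 2) = 4 * (2:ℝ)^(-(δ*(n:ℝ))) := by
    rw [← Real.rpow_add (by norm_num),
      show (n:ℝ) * (-(2+δ)) + ((n:ℝ)*2+2) = 2 + -(δ*(n:ℝ)) by ring,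
      Real.rpow_add (by norm_num)]
    norm_num
  calc r ^ (-(2+δ)) * (2:ℝ)^((n:ℝ) * (-(2+δ))) * (C₀ * (r ^ (2:ℝ) * (2:ℝ)^((n:ℝ)*2 + 2)))
      = C₀ * ((r ^ (-(2+δ)) * r ^ (2:ℝ)) * ((2:ℝ)^((n:ℝ) * (-(2+δ))) * (2:ℝ)^((n:ℝ)*2 + 2))) := by
        ring
    _ = C₀ * 4 * r^(-δ) * (2:ℝ)^(-(δ*(n:ℝ))) := by rw [e3, e4]; ring

lemma algB {r : ℝ} (hr : 0 < r) {δ : ℝ} (hδ2 : δ < 2) (C₀ : ℝ) (n : ℕ) :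
    (r * ((2:ℝ)^(n+1))⁻¹) ^ (-(2-δ)) * (C₀ * (r * ((2:ℝ)^n)⁻¹)^2)
      = C₀ * (2:ℝ)^(2-δ) * r^δ * ((2:ℝ)^(-δ))^n := by
  have hinv1 : ((2:ℝ)^(n+1))⁻¹ = (2:ℝ)^(-((n:ℝ)+1)) := by
    rw [Real.rpow_neg (by norm_num : (0:ℝ) ≤ 2),
      show ((n:ℝ)+1) = ((n+1:ℕ):ℝ) by push_cast; ring, Real.rpow_natCast]
  have hinv0 : ((2:ℝ)^n)⁻¹ = (2:ℝ)^(-(n:ℝ)) := by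
    rw [Real.rpow_neg (by norm_num : (0:ℝ) ≤ 2), Real.rpow_natCast]
  have e1 : (r * ((2:ℝ)^(n+1))⁻¹) ^ (-(2-δ))
      = r ^ (-(2-δ)) * (2:ℝ)^(((n:ℝ)+1) * (2-δ)) := by
    rw [hinv1, Real.mul_rpow hr.le (Real.rpow_nonneg (by norm_num) _)]
    congr 1
    rw [← Real.rpow_mul (by norm_num)]
    ring_nf
  have e2 : (r * ((2:ℝ)^n)⁻¹)^2 = r ^ (2:ℝ) * (2:ℝ)^(-((n:ℝ)*2)) := by
    rw [hinv0, mul_pow, ← Real.rpow_natCast r 2,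
      ← Real.rpow_natCast ((2:ℝ)^(-(n:ℝ))) 2, ← Real.rpow_mul (by norm_num)]
    push_cast
    ring_nf
  rw [e1, e2, two_rpow_npow]
  have e3 : r ^ (-(2-δ)) * r ^ (2:ℝ) = r ^ δ := by
    rw [← Real.rpow_add hr]; ring_nf
  have e4 : (2:ℝ)^(((n:ℝ)+1) * (2-δ)) * (2:ℝ)^(-((n:ℝ)*2)) = (2:ℝ)^(2-δ) * (2:ℝ)^(-(δ*(n:ℝ))) := by
    rw [← Real.rpow_add (by norm_num), ← Real.rpow_add (by norm_num)]
    ring_nf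
  calc r ^ (-(2-δ)) * (2:ℝ)^(((n:ℝ)+1) * (2-δ)) * (C₀ * (r ^ (2:ℝ) * (2:ℝ)^(-((n:ℝ)*2))))
      = C₀ * ((r ^ (-(2-δ)) * r ^ (2:ℝ)) * ((2:ℝ)^(((n:ℝ)+1) * (2-δ)) * (2:ℝ)^(-((n:ℝ)*2)))) := by
        ring
    _ = C₀ * (2:ℝ)^(2-δ) * r^δ * (2:ℝ)^(-(δ*(n:ℝ))) := by rw [e3, e4]; ring

lemma dyadicA (μ : Measure ℝ) [IsFiniteMeasure μ] {C₀ : ℝ} (hC₀ : 0 ≤ C₀)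
    (hcar : ∀ t ∈ Set.Ico (0:ℝ) 1, (μ (Set.Ico t 1)).toReal ≤ C₀ * (1 - t) ^ 2)
    {δ : ℝ} (hδ : 0 < δ) {r : ℝ} (hr0 : 0 < r) (hr1 : r ≤ 1) :
    ∫⁻ t in Set.Ico (0:ℝ) (1 - r), ENNReal.ofReal ((1 - t) ^ (-(2+δ))) ∂μ ≤
      ENNReal.ofReal (C₀ * 4 * r ^ (-δ)) * (1 - ENNReal.ofReal ((2:ℝ) ^ (-δ)))⁻¹ := by
  set K : ℕ → Set ℝ := fun n => Set.Ioc (1 - r*2^(n+1)) (1 - r*2^n) ∩ Set.Ico 0 1 with hK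
  have hsub : Set.Ico (0:ℝ) (1-r) ⊆ ⋃ n, K n := by
    intro t ht
    obtain ⟨ht0, ht1⟩ := ht
    have h1t : r < 1 - t := by linarith
    have hx : 1 ≤ (1-t)/r := by rw [le_div_iff₀ hr0]; linarith
    obtain ⟨n, hn1, hn2⟩ := exists_dyadic hx
    rw [le_div_iff₀ hr0] at hn1
    rw [div_lt_iff₀ hr0] at hn2
    exact Set.mem_iUnion.2 ⟨n, ⟨by constructor <;> nlinarith, ht0, by nlinarith⟩⟩
  refine le_trans (lintegral_mono_set hsub) ?_
  refine le_trans (lintegral_iUnion_le K _) ?_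
  have hbound : ∀ n, ∫⁻ t in K n, ENNReal.ofReal ((1-t)^(-(2+δ))) ∂μ ≤
      ENNReal.ofReal (C₀ * 4 * r ^ (-δ)) * ENNReal.ofReal ((2:ℝ)^(-δ)) ^ n := by
    intro n
    have h2n : (0:ℝ) < 2^n := by positivity
    have hstep : ∫⁻ t in K n, ENNReal.ofReal ((1-t)^(-(2+δ))) ∂μ ≤
        ENNReal.ofReal ((r*2^n)^(-(2+δ))) * μ (K n) := by
      rw [← setLIntegral_const]
      refine setLIntegral_mono measurable_const ?_
      rintro t ⟨⟨_, ht2⟩, _⟩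
      exact ENNReal.ofReal_le_ofReal
        (Real.rpow_le_rpow_of_nonpos (by positivity) (by linarith) (by linarith))
    have hum : max 0 (1 - r*2^(n+1)) ∈ Set.Ico (0:ℝ) 1 := by
      constructor
      · exact le_max_left _ _
      · rw [max_lt_iff]
        constructor
        · norm_num
        · nlinarith [pow_pos (by norm_num : (0:ℝ) < 2) (n+1)]
    have hKsub : K n ⊆ Set.Ico (max 0 (1 - r*2^(n+1))) 1 := by
      rintro t ⟨⟨ht1, _⟩, ht3, ht4⟩
      exact ⟨max_le ht3 ht1.le, ht4⟩
    have hμ : μ (K n) ≤ ENNReal.ofReal (C₀ * (r*2^(n+1))^2) := by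
      refine le_trans (measure_mono hKsub) ?_
      rw [← ENNReal.ofReal_toReal (measure_ne_top μ _)]
      refine ENNReal.ofReal_le_ofReal (le_trans (hcar _ hum) ?_)
      have h1 : (1 - max 0 (1 - r*2^(n+1))) ≤ r*2^(n+1) := by
        rcases max_cases (0:ℝ) (1 - r*2^(n+1)) with ⟨h, h'⟩ | ⟨h, h'⟩ <;> rw [h] <;> linarith
      have h2 : 0 ≤ 1 - max 0 (1 - r*2^(n+1)) := by
        have := hum.2; linarith
      have := mul_le_mul_of_nonneg_left (mul_self_le_mul_self h2 h1) hC₀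
      calc C₀ * (1 - max 0 (1 - r*2^(n+1)))^2
          = C₀ * ((1 - max 0 (1 - r*2^(n+1))) * (1 - max 0 (1 - r*2^(n+1)))) := by ring
        _ ≤ C₀ * (r*2^(n+1) * (r*2^(n+1))) := this
        _ = C₀ * (r*2^(n+1))^2 := by ring
    calc ∫⁻ t in K n, ENNReal.ofReal ((1-t)^(-(2+δ))) ∂μ
        ≤ ENNReal.ofReal ((r*2^n)^(-(2+δ))) * μ (K n) := hstep
      _ ≤ ENNReal.ofReal ((r*2^n)^(-(2+δ))) * ENNReal.ofReal (C₀ * (r*2^(n+1))^2) :=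
          mul_le_mul_right hμ _
      _ = ENNReal.ofReal ((r*2^n)^(-(2+δ)) * (C₀ * (r*2^(n+1))^2)) :=
          (ENNReal.ofReal_mul (by positivity)).symm
      _ = ENNReal.ofReal (C₀ * 4 * r^(-δ) * ((2:ℝ)^(-δ))^n) := by rw [algA hr0]
      _ = ENNReal.ofReal (C₀ * 4 * r^(-δ)) * ENNReal.ofReal ((2:ℝ)^(-δ)) ^ n := by
          rw [ENNReal.ofReal_mul (by positivity), ENNReal.ofReal_pow (by positivity)]
  refine le_trans (ENNReal.tsum_le_tsum hbound) ?_
  rw [ENNReal.tsum_mul_left, ENNReal.tsum_geometric]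

lemma dyadicB (μ : Measure ℝ) [IsFiniteMeasure μ] {C₀ : ℝ} (hC₀ : 0 ≤ C₀)
    (hcar : ∀ t ∈ Set.Ico (0:ℝ) 1, (μ (Set.Ico t 1)).toReal ≤ C₀ * (1 - t) ^ 2)
    {δ : ℝ} (hδ : 0 < δ) (hδ2 : δ < 2) {r : ℝ} (hr0 : 0 < r) (hr1 : r ≤ 1) :
    ∫⁻ t in Set.Ico (1 - r) 1, ENNReal.ofReal ((1 - t) ^ (-(2-δ))) ∂μ ≤
      ENNReal.ofReal (C₀ * 4 * r ^ δ) * (1 - ENNReal.ofReal ((2:ℝ) ^ (-δ)))⁻¹ := by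
  set J : ℕ → Set ℝ := fun n =>
    Set.Ico (1 - r*((2:ℝ)^n)⁻¹) (1 - r*((2:ℝ)^(n+1))⁻¹) with hJ
  have hsub : Set.Ico (1-r) 1 ⊆ ⋃ n, J n := by
    intro t ht
    obtain ⟨ht0, ht1⟩ := ht
    have h1t : 0 < 1 - t := by linarith
    have hrt : 1 - t ≤ r := by linarith
    have hx : 1 ≤ r/(1-t) := by rw [le_div_iff₀ h1t]; linarith
    obtain ⟨n, hn1, hn2⟩ := exists_dyadic hx
    rw [le_div_iff₀ h1t] at hn1
    rw [div_lt_iff₀ h1t] at hn2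
    have h2n : (0:ℝ) < 2^n := by positivity
    have h2n1 : (0:ℝ) < 2^(n+1) := by positivity
    have ha1 : (1:ℝ) - t ≤ r / 2^n := (le_div_iff₀ h2n).2 (by nlinarith)
    have ha2 : r / 2^(n+1) < 1 - t := (div_lt_iff₀ h2n1).2 (by nlinarith)
    rw [div_eq_mul_inv] at ha1 ha2
    exact Set.mem_iUnion.2 ⟨n, by linarith, by linarith⟩
  refine le_trans (lintegral_mono_set hsub) ?_
  refine le_trans (lintegral_iUnion_le J _) ?_
  have hbound : ∀ n, ∫⁻ t in J n, ENNReal.ofReal ((1-t)^(-(2-δ))) ∂μ ≤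
      ENNReal.ofReal (C₀ * 4 * r ^ δ) * ENNReal.ofReal ((2:ℝ)^(-δ)) ^ n := by
    intro n
    have h2n : (0:ℝ) < 2^n := by positivity
    have h2n1 : (0:ℝ) < 2^(n+1) := by positivity
    have hrn : (0:ℝ) < r * ((2:ℝ)^n)⁻¹ := by positivity
    have hrn1 : (0:ℝ) < r * ((2:ℝ)^(n+1))⁻¹ := by positivity
    have hstep : ∫⁻ t in J n, ENNReal.ofReal ((1-t)^(-(2-δ))) ∂μ ≤
        ENNReal.ofReal ((r*((2:ℝ)^(n+1))⁻¹)^(-(2-δ))) * μ (J n) := by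
      rw [← setLIntegral_const]
      refine setLIntegral_mono measurable_const ?_
      rintro t ⟨_, ht2⟩
      refine ENNReal.ofReal_le_ofReal
        (Real.rpow_le_rpow_of_nonpos hrn1 (by linarith) (by linarith))
    have h1n : (1:ℝ) ≤ 2^n := one_le_pow₀ (by norm_num)
    have hinv : ((2:ℝ)^n)⁻¹ * 2^n = 1 := inv_mul_cancel₀ h2n.ne'
    have hipos : (0:ℝ) < ((2:ℝ)^n)⁻¹ := inv_pos.2 h2n
    have hi1 : ((2:ℝ)^n)⁻¹ ≤ 1 := by nlinarith
    have hrle : r * ((2:ℝ)^n)⁻¹ ≤ 1 := by nlinarith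
    have hum : 1 - r * ((2:ℝ)^n)⁻¹ ∈ Set.Ico (0:ℝ) 1 := ⟨by linarith, by linarith⟩
    have hJsub : J n ⊆ Set.Ico (1 - r*((2:ℝ)^n)⁻¹) 1 := by
      rintro t ⟨ht1, ht2⟩
      exact ⟨ht1, by nlinarith⟩
    have hμ : μ (J n) ≤ ENNReal.ofReal (C₀ * (r*((2:ℝ)^n)⁻¹)^2) := by
      refine le_trans (measure_mono hJsub) ?_
      rw [← ENNReal.ofReal_toReal (measure_ne_top μ _)]
      refine ENNReal.ofReal_le_ofReal (le_trans (hcar _ hum) (le_of_eq ?_))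
      ring_nf
    have h2le : (2:ℝ)^(2-δ) ≤ 4 := by
      calc (2:ℝ)^(2-δ) ≤ (2:ℝ)^(2:ℝ) :=
            Real.rpow_le_rpow_of_exponent_le one_le_two (by linarith)
        _ = 4 := by
            rw [show (2:ℝ) = ((2:ℕ):ℝ) by norm_num, Real.rpow_natCast]; norm_num
    calc ∫⁻ t in J n, ENNReal.ofReal ((1-t)^(-(2-δ))) ∂μ
        ≤ ENNReal.ofReal ((r*((2:ℝ)^(n+1))⁻¹)^(-(2-δ))) * μ (J n) := hstep
      _ ≤ ENNReal.ofReal ((r*((2:ℝ)^(n+1))⁻¹)^(-(2-δ))) *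
            ENNReal.ofReal (C₀ * (r*((2:ℝ)^n)⁻¹)^2) := mul_le_mul_right hμ _
      _ = ENNReal.ofReal ((r*((2:ℝ)^(n+1))⁻¹)^(-(2-δ)) * (C₀ * (r*((2:ℝ)^n)⁻¹)^2)) :=
          (ENNReal.ofReal_mul (by positivity)).symm
      _ = ENNReal.ofReal (C₀ * (2:ℝ)^(2-δ) * r^δ * ((2:ℝ)^(-δ))^n) := by rw [algB hr0 hδ2]
      _ ≤ ENNReal.ofReal (C₀ * 4 * r^δ * ((2:ℝ)^(-δ))^n) := by
          refine ENNReal.ofReal_le_ofReal ?_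
          have h1 : (0:ℝ) ≤ r^δ * ((2:ℝ)^(-δ))^n := by positivity
          nlinarith [mul_le_mul_of_nonneg_right (mul_le_mul_of_nonneg_left h2le hC₀) h1]
      _ = ENNReal.ofReal (C₀ * 4 * r^δ) * ENNReal.ofReal ((2:ℝ)^(-δ)) ^ n := by
          rw [ENNReal.ofReal_mul (by positivity), ENNReal.ofReal_pow (by positivity)]
  refine le_trans (ENNReal.tsum_le_tsum hbound) ?_
  rw [ENNReal.tsum_mul_left, ENNReal.tsum_geometric]

lemma pt_core {p : ℝ} (hp0 : 0 < p) (hp2 : p < 2) {a : ℂ} (ha : ‖a‖ < 1)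
    {t : ℝ} (ht0 : 0 ≤ t) (ht1 : t < 1) {b : ℝ} (hb : 0 < b) (hble : b ≤ 1 - t*‖a‖) :
    (1 - ‖a‖ ^ 2) ^ (p / 2) / ((1 - t ^ 2) ^ (2 - p / 2) * ‖1 - (t:ℂ) * a‖ ^ p)
      ≤ (2:ℝ) ^ (p/2) * (1 - ‖a‖) ^ (p/2) / ((1 - t) ^ (2 - p/2) * b ^ p) := by
  have hs0 : (0:ℝ) ≤ ‖a‖ := norm_nonneg a
  have hs2 : ‖a‖^2 ≤ 1 := by nlinarith
  have hN : (1 - ‖a‖^2) ^ (p/2) ≤ (2:ℝ)^(p/2) * (1-‖a‖)^(p/2) := by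
    rw [← Real.mul_rpow (by norm_num) (by linarith)]
    exact Real.rpow_le_rpow (by linarith) (by nlinarith) (by linarith)
  have hre : 1 - t*‖a‖ ≤ ‖1 - (t:ℂ)*a‖ := by
    have h1 : (1 - (t:ℂ)*a).re = 1 - t*a.re := by simp
    have h2 : a.re ≤ ‖a‖ := by
      calc a.re ≤ |a.re| := le_abs_self _
        _ ≤ ‖a‖ := Complex.abs_re_le_norm a
        _ = ‖a‖ := rfl
    calc 1 - t*‖a‖ ≤ 1 - t*a.re := by nlinarith
      _ = (1 - (t:ℂ)*a).re := h1.symm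
      _ ≤ ‖1 - (t:ℂ)*a‖ := Complex.re_le_norm _
      _ = ‖1 - (t:ℂ)*a‖ := rfl
  have hD : (1 - t) ^ (2 - p/2) * b ^ p ≤ (1 - t^2) ^ (2 - p/2) * ‖1 - (t:ℂ)*a‖^p := by
    have d1 : (1 - t) ^ (2 - p/2) ≤ (1 - t^2) ^ (2 - p/2) :=
      Real.rpow_le_rpow (by linarith) (by nlinarith) (by linarith)
    have d2 : b ^ p ≤ ‖1 - (t:ℂ)*a‖^p :=
      Real.rpow_le_rpow hb.le (le_trans hble hre) hp0.le
    exact mul_le_mul d1 d2 (Real.rpow_nonneg hb.le p) (Real.rpow_nonneg (by nlinarith) _)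
  refine div_le_div₀ (mul_nonneg (Real.rpow_nonneg (by norm_num) _)
    (Real.rpow_nonneg (by linarith) _)) hN ?_ hD
  exact mul_pos (Real.rpow_pos_of_pos (by linarith) _) (Real.rpow_pos_of_pos hb _)

lemma ptA {p : ℝ} (hp0 : 0 < p) (hp2 : p < 2) {a : ℂ} (ha : ‖a‖ < 1)
    {t : ℝ} (ht0 : 0 ≤ t) (ht1 : t < 1) :
    (1 - ‖a‖ ^ 2) ^ (p / 2) / ((1 - t ^ 2) ^ (2 - p / 2) * ‖1 - (t:ℂ) * a‖ ^ p)
      ≤ (2:ℝ) ^ (p/2) * (1 - ‖a‖) ^ (p/2) * (1 - t) ^ (-(2+p/2)) := by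
  have h1t : (0:ℝ) < 1 - t := by linarith
  have hble : 1 - t ≤ 1 - t*‖a‖ := by nlinarith [norm_nonneg a]
  refine le_trans (pt_core hp0 hp2 ha ht0 ht1 h1t hble) (le_of_eq ?_)
  rw [← Real.rpow_add h1t, Real.rpow_neg h1t.le, div_eq_mul_inv]
  ring_nf

lemma ptB {p : ℝ} (hp0 : 0 < p) (hp2 : p < 2) {a : ℂ} (ha : ‖a‖ < 1)
    {t : ℝ} (ht0 : 0 ≤ t) (ht1 : t < 1) :
    (1 - ‖a‖ ^ 2) ^ (p / 2) / ((1 - t ^ 2) ^ (2 - p / 2) * ‖1 - (t:ℂ) * a‖ ^ p)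
      ≤ (2:ℝ) ^ (p/2) * (1 - ‖a‖) ^ (-(p/2)) * (1 - t) ^ (-(2-p/2)) := by
  have h1t : (0:ℝ) < 1 - t := by linarith
  have hs : (0:ℝ) < 1 - ‖a‖ := by linarith
  have hble : 1 - ‖a‖ ≤ 1 - t*‖a‖ := by nlinarith [norm_nonneg a]
  refine le_trans (pt_core hp0 hp2 ha ht0 ht1 hs hble) (le_of_eq ?_)
  have hs2pos : (0:ℝ) < (1-‖a‖)^(p/2) := Real.rpow_pos_of_pos hs _
  have key : (1-‖a‖)^(p/2) * (1-‖a‖)^(p/2) = (1-‖a‖)^p := by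
    rw [← Real.rpow_add hs]; ring_nf
  have h5 : (1-‖a‖)^(p/2) * ((1-‖a‖)^p)⁻¹ = ((1-‖a‖)^(p/2))⁻¹ := by
    rw [← key, mul_inv, ← mul_assoc, mul_inv_cancel₀ hs2pos.ne', one_mul]
  rw [div_eq_mul_inv, mul_inv, Real.rpow_neg hs.le, Real.rpow_neg h1t.le]
  linear_combination ((2:ℝ)^(p/2) * ((1-t)^(2-p/2))⁻¹) * h5

theorem two_carleson_integral_estimate (p : ℝ) (hp0 : 0 < p) (hp2 : p < 2)
    (μ : Measure ℝ) [IsFiniteMeasure μ]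
    (hcar : ∃ C : ℝ, ∀ t ∈ Set.Ico (0:ℝ) 1, (μ (Set.Ico t 1)).toReal ≤ C * (1 - t) ^ 2) :
    ∃ C : ℝ, ∀ a : ℂ, ‖a‖ < 1 →
      (∫ t in Set.Ico (0:ℝ) 1,
        (1 - ‖a‖ ^ 2) ^ (p / 2) /
          ((1 - t ^ 2) ^ (2 - p / 2) * ‖1 - (t:ℂ) * a‖ ^ p) ∂μ) ≤ C := by
  obtain ⟨C₀, hcar⟩ := hcar
  have hC₀ : 0 ≤ C₀ := by
    have := hcar 0 ⟨le_refl 0, one_pos⟩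
    have h0 : (0:ℝ) ≤ (μ (Set.Ico (0:ℝ) 1)).toReal := ENNReal.toReal_nonneg
    nlinarith
  set q : ENNReal := ENNReal.ofReal ((2:ℝ)^(-(p/2))) with hq
  have hq1 : q < 1 := by
    rw [hq, ← ENNReal.ofReal_one]
    exact ENNReal.ofReal_lt_ofReal_iff_of_nonneg (by positivity) |>.2
      (Real.rpow_lt_one_of_one_lt_of_neg one_lt_two (by linarith))
  have hqtop : (1 - q)⁻¹ ≠ ⊤ := by
    rw [Ne, ENNReal.inv_eq_top]
    exact (tsub_pos_of_lt hq1).ne'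
  set Ce : ENNReal := ENNReal.ofReal ((2:ℝ)^(p/2) * (C₀*4)) * (1-q)⁻¹ * 2 with hCe
  have hCetop : Ce ≠ ⊤ := by
    rw [hCe]
    exact ENNReal.mul_ne_top (ENNReal.mul_ne_top ENNReal.ofReal_ne_top hqtop) (by norm_num)
  refine ⟨Ce.toReal, fun a ha => ?_⟩
  have hs0 : (0:ℝ) ≤ ‖a‖ := norm_nonneg a
  set s : ℝ := ‖a‖ with hsdef
  set r : ℝ := 1 - s with hrdef
  have hr0 : 0 < r := by rw [hrdef]; linarith
  have hr1 : r ≤ 1 := by rw [hrdef]; linarith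
  have hrs : 1 - r = s := by rw [hrdef]; ring
  set f : ℝ → ℝ := fun t =>
    (1 - ‖a‖ ^ 2) ^ (p / 2) / ((1 - t ^ 2) ^ (2 - p / 2) * ‖1 - (t:ℂ) * a‖ ^ p) with hf
  have hfmeas : Measurable f := by
    rw [hf]; fun_prop
  have hnn : 0 ≤ᶠ[ae (μ.restrict (Set.Ico (0:ℝ) 1))] f := by
    refine (ae_restrict_iff' measurableSet_Ico).2 (ae_of_all _ fun t ht => ?_)
    obtain ⟨ht0, ht1⟩ := ht
    refine div_nonneg (Real.rpow_nonneg (by nlinarith) _) ?_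
    exact mul_nonneg (Real.rpow_nonneg (by nlinarith) _) (Real.rpow_nonneg (norm_nonneg _) _)
  rw [show (∫ t in Set.Ico (0:ℝ) 1,
      (1 - ‖a‖ ^ 2) ^ (p / 2) / ((1 - t ^ 2) ^ (2 - p / 2) * ‖1 - (t:ℂ) * a‖ ^ p) ∂μ)
      = ∫ t in Set.Ico (0:ℝ) 1, f t ∂μ from rfl]
  rw [integral_eq_lintegral_of_nonneg_ae hnn hfmeas.aestronglyMeasurable]
  refine ENNReal.toReal_mono hCetop ?_
  -- main lintegral bound
  have hsplit : Set.Ico (0:ℝ) 1 = Set.Ico 0 s ∪ Set.Ico s 1 :=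
    (Set.Ico_union_Ico_eq_Ico hs0 ha.le).symm
  rw [hsplit]
  refine le_trans (lintegral_union_le _ _ _) ?_
  have pieceA : ∫⁻ t in Set.Ico (0:ℝ) s, ENNReal.ofReal (f t) ∂μ ≤
      ENNReal.ofReal ((2:ℝ)^(p/2) * (C₀*4)) * (1-q)⁻¹ := by
    have step : ∀ t ∈ Set.Ico (0:ℝ) s, ENNReal.ofReal (f t) ≤
        ENNReal.ofReal ((2:ℝ)^(p/2) * r^(p/2)) * ENNReal.ofReal ((1-t)^(-(2+p/2))) := by
      intro t ht
      obtain ⟨ht0, hts⟩ := ht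
      have ht1 : t < 1 := lt_of_lt_of_le hts ha.le
      rw [← ENNReal.ofReal_mul (by positivity)]
      refine ENNReal.ofReal_le_ofReal ?_
      have := ptA hp0 hp2 ha ht0 ht1
      rw [hf]
      calc (1 - ‖a‖ ^ 2) ^ (p / 2) / ((1 - t ^ 2) ^ (2 - p / 2) * ‖1 - (t:ℂ) * a‖ ^ p)
          ≤ (2:ℝ) ^ (p/2) * (1 - ‖a‖) ^ (p/2) * (1 - t) ^ (-(2+p/2)) := this
        _ = (2:ℝ)^(p/2) * r^(p/2) * ((1-t)^(-(2+p/2))) := by rw [hrdef, hsdef]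
    calc ∫⁻ t in Set.Ico (0:ℝ) s, ENNReal.ofReal (f t) ∂μ
        ≤ ∫⁻ t in Set.Ico (0:ℝ) s,
            ENNReal.ofReal ((2:ℝ)^(p/2) * r^(p/2)) * ENNReal.ofReal ((1-t)^(-(2+p/2))) ∂μ :=
          setLIntegral_mono (by fun_prop) step
      _ = ENNReal.ofReal ((2:ℝ)^(p/2) * r^(p/2)) *
            ∫⁻ t in Set.Ico (0:ℝ) s, ENNReal.ofReal ((1-t)^(-(2+p/2))) ∂μ :=
          lintegral_const_mul' _ _ ENNReal.ofReal_ne_top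
      _ ≤ ENNReal.ofReal ((2:ℝ)^(p/2) * r^(p/2)) *
            (ENNReal.ofReal (C₀ * 4 * r ^ (-(p/2))) * (1 - q)⁻¹) := by
          refine mul_le_mul_right ?_ _
          rw [← hrs]
          exact dyadicA μ hC₀ hcar (by linarith) hr0 hr1
      _ = ENNReal.ofReal ((2:ℝ)^(p/2) * (C₀*4)) * (1-q)⁻¹ := by
          rw [← mul_assoc, ← ENNReal.ofReal_mul (by positivity)]
          congr 2
          have : r^(p/2) * r^(-(p/2)) = 1 := by
            rw [← Real.rpow_add hr0]; norm_num
          calc (2:ℝ)^(p/2) * r^(p/2) * (C₀ * 4 * r^(-(p/2)))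
              = (2:ℝ)^(p/2) * (C₀*4) * (r^(p/2) * r^(-(p/2))) := by ring
            _ = (2:ℝ)^(p/2) * (C₀*4) := by rw [this, mul_one]
  have pieceB : ∫⁻ t in Set.Ico s 1, ENNReal.ofReal (f t) ∂μ ≤
      ENNReal.ofReal ((2:ℝ)^(p/2) * (C₀*4)) * (1-q)⁻¹ := by
    have step : ∀ t ∈ Set.Ico s 1, ENNReal.ofReal (f t) ≤
        ENNReal.ofReal ((2:ℝ)^(p/2) * r^(-(p/2))) * ENNReal.ofReal ((1-t)^(-(2-p/2))) := by
      intro t ht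
      obtain ⟨hts, ht1⟩ := ht
      have ht0 : 0 ≤ t := le_trans hs0 hts
      rw [← ENNReal.ofReal_mul (by positivity)]
      refine ENNReal.ofReal_le_ofReal ?_
      have := ptB hp0 hp2 ha ht0 ht1
      rw [hf]
      calc (1 - ‖a‖ ^ 2) ^ (p / 2) / ((1 - t ^ 2) ^ (2 - p / 2) * ‖1 - (t:ℂ) * a‖ ^ p)
          ≤ (2:ℝ) ^ (p/2) * (1 - ‖a‖) ^ (-(p/2)) * (1 - t) ^ (-(2-p/2)) := this
        _ = (2:ℝ)^(p/2) * r^(-(p/2)) * ((1-t)^(-(2-p/2))) := by rw [hrdef, hsdef]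
    calc ∫⁻ t in Set.Ico s 1, ENNReal.ofReal (f t) ∂μ
        ≤ ∫⁻ t in Set.Ico s 1,
            ENNReal.ofReal ((2:ℝ)^(p/2) * r^(-(p/2))) * ENNReal.ofReal ((1-t)^(-(2-p/2))) ∂μ :=
          setLIntegral_mono (by fun_prop) step
      _ = ENNReal.ofReal ((2:ℝ)^(p/2) * r^(-(p/2))) *
            ∫⁻ t in Set.Ico s 1, ENNReal.ofReal ((1-t)^(-(2-p/2))) ∂μ :=
          lintegral_const_mul' _ _ ENNReal.ofReal_ne_top
      _ ≤ ENNReal.ofReal ((2:ℝ)^(p/2) * r^(-(p/2))) *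
            (ENNReal.ofReal (C₀ * 4 * r ^ (p/2)) * (1 - q)⁻¹) := by
          refine mul_le_mul_right ?_ _
          rw [← hrs]
          exact dyadicB μ hC₀ hcar (by linarith) (by linarith) hr0 hr1
      _ = ENNReal.ofReal ((2:ℝ)^(p/2) * (C₀*4)) * (1-q)⁻¹ := by
          rw [← mul_assoc, ← ENNReal.ofReal_mul (by positivity)]
          congr 2
          have : r^(-(p/2)) * r^(p/2) = 1 := by
            rw [← Real.rpow_add hr0]; norm_num
          calc (2:ℝ)^(p/2) * r^(-(p/2)) * (C₀ * 4 * r^(p/2))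
              = (2:ℝ)^(p/2) * (C₀*4) * (r^(-(p/2)) * r^(p/2)) := by ring
            _ = (2:ℝ)^(p/2) * (C₀*4) := by rw [this, mul_one]
  calc (∫⁻ t in Set.Ico (0:ℝ) s, ENNReal.ofReal (f t) ∂μ) +
        ∫⁻ t in Set.Ico s 1, ENNReal.ofReal (f t) ∂μ
      ≤ ENNReal.ofReal ((2:ℝ)^(p/2) * (C₀*4)) * (1-q)⁻¹ +
        ENNReal.ofReal ((2:ℝ)^(p/2) * (C₀*4)) * (1-q)⁻¹ := add_le_add pieceA pieceB
    _ = Ce := by rw [hCe, mul_two]
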